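/- A continuous linear operator T on a separable Fréchet space admits an AP-hypercyclic vector if and only if for every pair of nonempty open sets U, V and every m > 0 there exists x ∈ U such that N_T(x,V) contains an arithmetic progression of length m. -/

import Mathlib

open Filter Topology

def ContainsAPs (A : Set ℕ) : Prop :=
  ∀ m : ℕ, ∃ a k : ℕ, 1 ≤ a ∧ 1 ≤ k ∧ ∀ j ≤ m, a + j * k ∈ A

theorem exists_AP_hypercyclic_iff
    {X : Type*} [AddCommGroup X] [Module ℝ X] [UniformSpace X] [IsUniformAddGroup X]
    [ContinuousSMul ℝ X] [LocallyConvexSpace ℝ X] [CompleteSpace X]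
    [TopologicalSpace.MetrizableSpace X] [TopologicalSpace.SeparableSpace X]
    (T : X →L[ℝ] X) :
    (∃ x : X, ∀ U : Set X, IsOpen U → U.Nonempty →
        ContainsAPs {n : ℕ | (T ^ n) x ∈ U})
    ↔ (∀ U V : Set X, IsOpen U → U.Nonempty → IsOpen V → V.Nonempty →
        ∀ m : ℕ, 0 < m → ∃ x ∈ U, ∃ a k : ℕ, 1 ≤ a ∧ 1 ≤ k ∧
          ∀ j < m, (T ^ (a + j * k)) x ∈ V) := by
  constructor
  · rintro ⟨x, hx⟩ U V hU hUne hV hVne m hm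
    obtain ⟨n, k0, hn1, -, hn⟩ := hx U hU hUne 0
    have hnx : (T ^ n) x ∈ U := by simpa using hn 0 (le_refl 0)
    obtain ⟨a, k, ha1, hk1, hAP⟩ := hx V hV hVne (m + n)
    have hnk : n ≤ n * k := Nat.le_mul_of_pos_right n hk1
    refine ⟨(T ^ n) x, hnx, a + n * k - n, k, by omega, hk1, ?_⟩
    intro j hj
    have h1 : (a + n * k - n) + j * k + n = a + (n + j) * k := by
      have : (n + j) * k = n * k + j * k := by ring
      omega
    have key : (T ^ ((a + n * k - n) + j * k + n)) x ∈ V := by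
      rw [h1]; exact hAP (n + j) (by omega)
    have h2 : ∀ p : ℕ, (T ^ (p + n)) x = (T ^ p) ((T ^ n) x) := fun p => by
      rw [pow_add, ContinuousLinearMap.mul_apply]
    rw [← h2]; exact key
  · intro h
    haveI : Nonempty X := ⟨0⟩
    haveI : (uniformity X).IsCountablyGenerated := by
      rw [uniformity_eq_comap_nhds_zero]
      infer_instance
    haveI : SecondCountableTopology X := UniformSpace.secondCountable_of_separable X
    haveI hι : Countable {V : Set X // V ∈ TopologicalSpace.countableBasis X ∧ V.Nonempty} :=
      ((TopologicalSpace.countable_countableBasis X).mono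
        (fun V hV => hV.1)).to_subtype
    set G : {V : Set X // V ∈ TopologicalSpace.countableBasis X ∧ V.Nonempty} → ℕ → Set X :=
      fun V m => ⋃ a, ⋃ k,
        {x | 1 ≤ a ∧ 1 ≤ k ∧ ∀ j ≤ m, (T ^ (a + j * k)) x ∈ V.1} with hG
    have hGo : ∀ V m, IsOpen (G V m) := by
      intro V m
      refine isOpen_iUnion fun a => isOpen_iUnion fun k => ?_
      by_cases hak : 1 ≤ a ∧ 1 ≤ k
      · have heq : {x | 1 ≤ a ∧ 1 ≤ k ∧ ∀ j ≤ m, (T ^ (a + j * k)) x ∈ V.1}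
            = ⋂ j ∈ Finset.range (m + 1), (T ^ (a + j * k)) ⁻¹' V.1 := by
          ext y
          simp [hak.1, hak.2, Nat.lt_succ_iff]
        rw [heq]
        exact isOpen_biInter_finset fun j _ =>
          (TopologicalSpace.isOpen_of_mem_countableBasis V.2.1).preimage
            (T ^ (a + j * k)).continuous
      · have heq : {x | 1 ≤ a ∧ 1 ≤ k ∧ ∀ j ≤ m, (T ^ (a + j * k)) x ∈ V.1}
            = (∅ : Set X) := by
          ext y; simp only [Set.mem_setOf_eq, Set.mem_empty_iff_false, iff_false]
          tauto
        rw [heq]; exact isOpen_empty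
    have hGd : ∀ V m, Dense (G V m) := by
      intro V m
      rw [dense_iff_inter_open]
      intro U hU hUne
      obtain ⟨y, hyU, a, k, ha, hk, hAP⟩ := h U V.1 hU hUne
        (TopologicalSpace.isOpen_of_mem_countableBasis V.2.1) V.2.2 (m + 1) (Nat.succ_pos m)
      refine ⟨y, hyU, ?_⟩
      rw [hG]
      exact Set.mem_iUnion.2 ⟨a, Set.mem_iUnion.2 ⟨k,
        ⟨ha, hk, fun j hj => hAP j (Nat.lt_succ_of_le hj)⟩⟩⟩
    have hdense : Dense (⋂ p : {V : Set X // V ∈ TopologicalSpace.countableBasis X ∧ V.Nonempty} × ℕ,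
        G p.1 p.2) :=
      dense_iInter_of_isOpen (fun p => hGo p.1 p.2) (fun p => hGd p.1 p.2)
    obtain ⟨x, hx⟩ := hdense.nonempty
    refine ⟨x, fun U hU hUne m => ?_⟩
    obtain ⟨u, hu⟩ := hUne
    obtain ⟨V, hVB, huV, hVU⟩ :=
      (TopologicalSpace.isBasis_countableBasis X).exists_subset_of_mem_open hu hU
    have hxG := Set.mem_iInter.1 hx (⟨V, hVB, ⟨u, huV⟩⟩, m)
    rw [hG] at hxG
    simp only [Set.mem_iUnion, Set.mem_setOf_eq] at hxG
    obtain ⟨a, k, ha, hk, hj⟩ := hxG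
    exact ⟨a, k, ha, hk, fun j hjm => hVU (hj j hjm)⟩
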